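/- Let p_max = max_j p_j and S = {j : p_j = p_max}. For any probability vector p, the limit of the majority-vote success probability exists and equals lim_{N→∞} Pr(a_1 | p; N) = 1/|S| if 1 ∈ S, and 0 otherwise. -/

import Mathlib

open Finset Filter

/-- Number of the `N` samples in `ω` equal to answer `j`. -/
def count {m N : ℕ} (ω : Fin N → Fin m) (j : Fin m) : ℕ :=
  (Finset.univ.filter fun i => ω i = j).card

/-- The set `J(ω)` of answers achieving the maximal count among the samples `ω`. -/
def maxSet {m N : ℕ} (ω : Fin N → Fin m) : Finset (Fin m) :=
  Finset.univ.filter fun j => ∀ k, count ω k ≤ count ω j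

/-- Majority-vote probability that answer `l` is returned after `N` i.i.d. samples
drawn from `p`: the most frequent answer is chosen, ties broken uniformly. -/
noncomputable def majorityProb {m : ℕ} (p : Fin m → ℝ) (N : ℕ) (l : Fin m) : ℝ :=
  ∑ ω : Fin N → Fin m, (∏ i, p (ω i)) *
    (if l ∈ maxSet ω then (1 : ℝ) / ((maxSet ω).card : ℝ) else 0)

lemma maxSet_nonempty {m N : ℕ} (hm : 0 < m) (ω : Fin N → Fin m) : (maxSet ω).Nonempty := by
  obtain ⟨j, -, hj⟩ := Finset.exists_max_image Finset.univ (count ω)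
    ⟨⟨0, hm⟩, Finset.mem_univ _⟩
  refine ⟨j, ?_⟩
  simp only [maxSet, Finset.mem_filter, Finset.mem_univ, true_and]
  exact fun k => hj k (Finset.mem_univ k)

lemma sum_majorityProb {m : ℕ} (hm : 0 < m) (p : Fin m → ℝ) (hsum : ∑ j, p j = 1) (N : ℕ) :
    ∑ l, majorityProb p N l = 1 := by
  unfold majorityProb
  rw [Finset.sum_comm]
  have h : ∀ ω : Fin N → Fin m,
      (∑ l, (∏ i, p (ω i)) *
        (if l ∈ maxSet ω then (1 : ℝ) / ((maxSet ω).card : ℝ) else 0)) = ∏ i, p (ω i) := by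
    intro ω
    have hcard : ((maxSet ω).card : ℝ) ≠ 0 := by
      exact_mod_cast (Finset.card_pos.mpr (maxSet_nonempty hm ω)).ne'
    rw [← Finset.mul_sum]
    have : (∑ l, (if l ∈ maxSet ω then (1 : ℝ) / ((maxSet ω).card : ℝ) else 0)) = 1 := by
      rw [Finset.sum_ite_mem, Finset.univ_inter, Finset.sum_const, nsmul_eq_mul,
        mul_one_div, div_self hcard]
    rw [this, mul_one]
  rw [Finset.sum_congr rfl fun ω _ => h ω, ← Fintype.sum_pow, hsum, one_pow]

lemma count_comp {m N : ℕ} (σ : Equiv.Perm (Fin m)) (ω : Fin N → Fin m) (k : Fin m) :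
    count (fun i => σ (ω i)) (σ k) = count ω k := by
  unfold count
  congr 1
  ext i
  simp [σ.injective.eq_iff]

lemma mem_maxSet_comp {m N : ℕ} (σ : Equiv.Perm (Fin m)) (ω : Fin N → Fin m) (k : Fin m) :
    σ k ∈ maxSet (fun i => σ (ω i)) ↔ k ∈ maxSet ω := by
  simp only [maxSet, Finset.mem_filter, Finset.mem_univ, true_and]
  constructor
  · intro h k'
    have := h (σ k')
    rwa [count_comp, count_comp] at this
  · intro h k'
    conv_lhs => rw [← σ.apply_symm_apply k']
    rw [count_comp, count_comp]
    exact h _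

lemma maxSet_comp {m N : ℕ} (σ : Equiv.Perm (Fin m)) (ω : Fin N → Fin m) :
    maxSet (fun i => σ (ω i)) = (maxSet ω).image σ := by
  ext k
  rw [Finset.mem_image]
  constructor
  · intro hk
    refine ⟨σ.symm k, ?_, σ.apply_symm_apply k⟩
    rw [← mem_maxSet_comp σ ω (σ.symm k)]
    simpa using hk
  · rintro ⟨j, hj, rfl⟩
    exact (mem_maxSet_comp σ ω j).mpr hj

lemma majorityProb_perm {m : ℕ} (p : Fin m → ℝ) (σ : Equiv.Perm (Fin m))
    (hp : ∀ a, p (σ a) = p a) (N : ℕ) (l : Fin m) :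
    majorityProb p N (σ l) = majorityProb p N l := by
  unfold majorityProb
  refine (Fintype.sum_equiv (Equiv.piCongrRight fun _ : Fin N => σ) _ _ fun ω => ?_).symm
  have hω : ((Equiv.piCongrRight fun _ : Fin N => σ) ω) = fun i => σ (ω i) := rfl
  rw [hω]
  congr 1
  · exact (Finset.prod_congr rfl fun i _ => (hp (ω i)).symm)
  · have h1 : (l ∈ maxSet ω) ↔ (σ l ∈ maxSet fun i => σ (ω i)) :=
      (mem_maxSet_comp σ ω l).symm
    have h2 : (maxSet fun i => σ (ω i)).card = (maxSet ω).card := by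
      rw [maxSet_comp, Finset.card_image_of_injective _ σ.injective]
    rw [h2]
    by_cases hmem : l ∈ maxSet ω
    · rw [if_pos hmem, if_pos (h1.mp hmem)]
    · rw [if_neg hmem, if_neg fun h => hmem (h1.mpr h)]

lemma majorityProb_nonneg {m : ℕ} (p : Fin m → ℝ) (hnn : ∀ j, 0 ≤ p j) (N : ℕ) (l : Fin m) :
    0 ≤ majorityProb p N l := by
  apply Finset.sum_nonneg
  intro ω _
  apply mul_nonneg (Finset.prod_nonneg fun i _ => hnn (ω i))
  split_ifs
  · positivity
  · exact le_refl 0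

lemma majorityProb_tendsto_zero {m : ℕ} (p : Fin m → ℝ) (hnn : ∀ j, 0 ≤ p j)
    (hsum : ∑ j, p j = 1) (l j : Fin m) (hlj : p l < p j) :
    Tendsto (fun N => majorityProb p N l) atTop (nhds 0) := by
  rcases eq_or_lt_of_le (hnn l) with h0 | hpos
  · -- case p l = 0 : eventually zero
    apply Tendsto.congr' _ tendsto_const_nhds
    filter_upwards [eventually_ge_atTop 1] with N hN
    symm
    unfold majorityProb
    apply Finset.sum_eq_zero
    intro ω _
    by_cases hc : ∃ i, ω i = l
    · obtain ⟨i, hi⟩ := hc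
      have hz : ∏ i, p (ω i) = 0 :=
        Finset.prod_eq_zero (Finset.mem_univ i) (by rw [hi, ← h0])
      rw [hz, zero_mul]
    · push_neg at hc
      have hcl : count ω l = 0 := by
        unfold count
        rw [Finset.card_eq_zero, Finset.filter_eq_empty_iff]
        exact fun i _ => hc i
      have hmem : l ∉ maxSet ω := by
        intro hmem
        simp only [maxSet, Finset.mem_filter, Finset.mem_univ, true_and] at hmem
        obtain ⟨i⟩ : Nonempty (Fin N) := ⟨⟨0, hN⟩⟩
        have h1 : 1 ≤ count ω (ω i) := by
          apply Finset.card_pos.mpr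
          exact ⟨i, Finset.mem_filter.mpr ⟨Finset.mem_univ i, rfl⟩⟩
        have := hmem (ω i)
        omega
      rw [if_neg hmem, mul_zero]
  · -- case 0 < p l : Chernoff bound
    have hpl : 0 < p l := hpos
    have hpj : 0 < p j := lt_trans hpl hlj
    have hlnej : l ≠ j := fun h => absurd (h ▸ hlj) (lt_irrefl _)
    set a := Real.sqrt (p l) with ha
    set b := Real.sqrt (p j) with hb
    have ha0 : 0 < a := Real.sqrt_pos.mpr hpl
    have hb0 : 0 < b := Real.sqrt_pos.mpr hpj
    have hab : a < b := Real.sqrt_lt_sqrt hpl.le hlj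
    have ha2 : a * a = p l := Real.mul_self_sqrt hpl.le
    have hb2 : b * b = p j := Real.mul_self_sqrt hpj.le
    set t := b / a with ht
    set s := a / b with hs
    have hts : t * s = 1 := by
      rw [ht, hs, div_mul_div_comm, mul_comm b a, div_self (by positivity)]
    have ht1 : 1 ≤ t := (one_le_div ha0).mpr hab.le
    have ht0 : 0 ≤ t := le_trans zero_le_one ht1
    have hs0 : 0 ≤ s := div_nonneg ha0.le hb0.le
    set f : Fin m → ℝ := fun x => p x * ((if x = l then t else 1) * (if x = j then s else 1))
      with hf
    have hf0 : ∀ x, 0 ≤ f x := fun x => by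
      apply mul_nonneg (hnn x)
      apply mul_nonneg <;> split_ifs <;> norm_num <;> assumption
    set r := ∑ x, f x with hr
    have hr0 : 0 ≤ r := Finset.sum_nonneg fun x _ => hf0 x
    have hreq : r = 1 + p l * (t - 1) + p j * (s - 1) := by
      have hfx : ∀ x, f x = p x + ((if x = l then p l * (t - 1) else 0)
          + (if x = j then p j * (s - 1) else 0)) := by
        intro x
        simp only [hf]
        by_cases hxl : x = l
        · have hxj : ¬ x = j := fun h => hlnej (hxl.symm.trans h)
          simp only [if_pos hxl, if_neg hxj]
          rw [hxl]; ring
        · by_cases hxj : x = j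
          · simp only [if_neg hxl, if_pos hxj]
            rw [hxj]; ring
          · simp only [if_neg hxl, if_neg hxj]
            ring
      rw [hr, Finset.sum_congr rfl fun x _ => hfx x, Finset.sum_add_distrib,
        Finset.sum_add_distrib, hsum, Finset.sum_ite_eq' Finset.univ l,
        Finset.sum_ite_eq' Finset.univ j, if_pos (Finset.mem_univ l),
        if_pos (Finset.mem_univ j)]
      ring
    have hr1 : r < 1 := by
      have h1 : p l * t = a * b := by
        rw [ht, ← ha2]; field_simp
      have h2 : p j * s = a * b := by
        rw [hs, ← hb2]; field_simp
      have h3 : 0 < (b - a) * (b - a) := mul_pos (sub_pos.mpr hab) (sub_pos.mpr hab)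
      have := hreq
      nlinarith [ha2, hb2]
    -- the bound  majorityProb p N l ≤ r ^ N
    have hbound : ∀ N, majorityProb p N l ≤ r ^ N := by
      intro N
      rw [hr, Fintype.sum_pow f N]
      unfold majorityProb
      apply Finset.sum_le_sum
      intro ω _
      have hprod : ∏ i, f (ω i) =
          (∏ i, p (ω i)) * (t ^ count ω l * s ^ count ω j) := by
        simp only [hf]
        rw [Finset.prod_mul_distrib, Finset.prod_mul_distrib]
        congr 1
        congr 1
        · rw [count, ← Finset.prod_filter, Finset.prod_const]
        · rw [count, ← Finset.prod_filter, Finset.prod_const]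
      rw [hprod]
      by_cases hmem : l ∈ maxSet ω
      · rw [if_pos hmem]
        apply mul_le_mul_of_nonneg_left _ (Finset.prod_nonneg fun i _ => hnn (ω i))
        have hcount : count ω j ≤ count ω l := by
          simp only [maxSet, Finset.mem_filter, Finset.mem_univ, true_and] at hmem
          exact hmem j
        have hts1 : (1 : ℝ) ≤ t ^ count ω l * s ^ count ω j := by
          have : t ^ count ω l * s ^ count ω j
              = t ^ (count ω l - count ω j) * (t * s) ^ count ω j := by
            rw [mul_pow, ← mul_assoc, ← pow_add, Nat.sub_add_cancel hcount]
          rw [this, hts, one_pow, mul_one]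
          exact one_le_pow₀ ht1
        have hcardpos : (1 : ℝ) ≤ ((maxSet ω).card : ℝ) := by
          exact_mod_cast Finset.card_pos.mpr ⟨l, hmem⟩
        calc (1 : ℝ) / ((maxSet ω).card : ℝ) ≤ 1 := by
              rw [div_le_one (lt_of_lt_of_le zero_lt_one hcardpos)]; exact hcardpos
          _ ≤ t ^ count ω l * s ^ count ω j := hts1
      · rw [if_neg hmem, mul_zero]
        apply mul_nonneg (Finset.prod_nonneg fun i _ => hnn (ω i))
        exact mul_nonneg (pow_nonneg ht0 _) (pow_nonneg hs0 _)
    exact squeeze_zero (fun N => majorityProb_nonneg p hnn N l) hbound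
      (tendsto_pow_atTop_nhds_zero_of_lt_one hr0 hr1)

/-- The limit of the majority-vote success probability always exists and
equals `1/|S|` if `a₁ ∈ S = {j : p j = p_max}`, and `0` otherwise. -/
theorem majorityProb_tendsto_limit {m : ℕ} (hm : 0 < m) (p : Fin m → ℝ)
    (hnn : ∀ j, 0 ≤ p j) (hsum : ∑ j, p j = 1)
    (S : Finset (Fin m)) (hS : S = Finset.univ.filter fun j => ∀ k, p k ≤ p j) :
    Tendsto (fun N => majorityProb p N ⟨0, hm⟩) atTop
      (nhds (if (⟨0, hm⟩ : Fin m) ∈ S then 1 / (S.card : ℝ) else 0)) := by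
  set l₀ : Fin m := ⟨0, hm⟩ with hl₀
  have hmemS : ∀ l : Fin m, l ∈ S ↔ ∀ k, p k ≤ p l := by
    intro l; rw [hS]; simp
  by_cases h0 : l₀ ∈ S
  · rw [if_pos h0]
    have hScard : (0 : ℝ) < (S.card : ℝ) := by
      exact_mod_cast Finset.card_pos.mpr ⟨l₀, h0⟩
    have key : ∀ N, majorityProb p N l₀ =
        (1 - ∑ l ∈ Sᶜ, majorityProb p N l) / (S.card : ℝ) := by
      intro N
      have h1 : (∑ l ∈ S, majorityProb p N l) + ∑ l ∈ Sᶜ, majorityProb p N l = 1 := by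
        rw [Finset.sum_add_sum_compl]
        exact sum_majorityProb hm p hsum N
      have h2 : ∑ l ∈ S, majorityProb p N l = (S.card : ℝ) * majorityProb p N l₀ := by
        have hcongr : ∀ l ∈ S, majorityProb p N l = majorityProb p N l₀ := by
          intro l hl
          have hpll : p l = p l₀ :=
            le_antisymm (((hmemS l₀).mp h0) l) (((hmemS l).mp hl) l₀)
          have hswap : (Equiv.swap l₀ l) l₀ = l := Equiv.swap_apply_left _ _
          rw [← hswap, majorityProb_perm]
          intro x
          rcases eq_or_ne x l₀ with rfl | hx0
          · rw [Equiv.swap_apply_left]; exact hpll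
          · rcases eq_or_ne x l with rfl | hxl
            · rw [Equiv.swap_apply_right]; exact hpll.symm
            · rw [Equiv.swap_apply_of_ne_of_ne hx0 hxl]
        rw [Finset.sum_congr rfl hcongr, Finset.sum_const, nsmul_eq_mul]
      rw [h2] at h1
      field_simp
      linarith
    rw [funext key]
    have hzero : Tendsto (fun N => ∑ l ∈ Sᶜ, majorityProb p N l) atTop (nhds 0) := by
      have : Tendsto (fun N => ∑ l ∈ Sᶜ, majorityProb p N l) atTop
          (nhds (∑ l ∈ Sᶜ, (0 : ℝ))) := by
        apply tendsto_finset_sum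
        intro l hl
        have hlS : l ∉ S := Finset.mem_compl.mp hl
        rw [hmemS l] at hlS
        push_neg at hlS
        obtain ⟨j, hj⟩ := hlS
        exact majorityProb_tendsto_zero p hnn hsum l j hj
      simpa using this
    have hT : Tendsto (fun N => (1 - ∑ l ∈ Sᶜ, majorityProb p N l) / (S.card : ℝ))
        atTop (nhds ((1 - 0) / (S.card : ℝ))) :=
      (((tendsto_const_nhds : Tendsto (fun _ : ℕ => (1 : ℝ)) atTop (nhds 1))).sub hzero).div_const (S.card : ℝ)
    simpa using hT
  · rw [if_neg h0]
    rw [hmemS l₀] at h0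
    push_neg at h0
    obtain ⟨j, hj⟩ := h0
    exact majorityProb_tendsto_zero p hnn hsum l₀ j hj
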